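/- Let a, b, c, d ∈ ℝ with c + d ≠ 0 and a + b = c + d. Define g : ℝ → ℝ by g(α) = |(a·e^{iα} + b)/(c·e^{iα} + d)| − 1, where |·| is the complex modulus and e^{iα} = exp(i·α) ∈ ℂ. Then g(α) = O(α²) as α → 0; that is, the function α ↦ g(α) is big-O of α ↦ α² in the neighborhood filter of 0. -/

import Mathlib

open Asymptotics Filter

private lemma normSq_key (a b α : ℝ) :
    Complex.normSq ((a : ℂ) * Complex.exp (Complex.I * α) + b)
      = (a + b) ^ 2 - 2 * a * b * (1 - Real.cos α) := by
  rw [mul_comm Complex.I, Complex.exp_mul_I]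
  simp [Complex.normSq_apply, Complex.add_re, Complex.add_im, Complex.mul_re, Complex.mul_im,
    Complex.cos_ofReal_re, Complex.sin_ofReal_re, Complex.cos_ofReal_im, Complex.sin_ofReal_im]
  linear_combination a ^ 2 * Real.sin_sq_add_cos_sq α

private lemma one_sub_cos_isBigO : (fun α : ℝ => 1 - Real.cos α) =O[nhds 0] (fun α : ℝ => α ^ 2) := by
  rw [Asymptotics.isBigO_iff]
  refine ⟨1, ?_⟩
  have h : ∀ᶠ α : ℝ in nhds 0, |α| ≤ 1 := by
    have := Metric.eventually_nhds_iff.mpr (⟨1, one_pos, fun {y} hy => le_of_lt (by simpa [Real.dist_eq] using hy)⟩ :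
      ∃ ε > 0, ∀ ⦃y : ℝ⦄, dist y 0 < ε → |y| ≤ 1)
    exact this
  filter_upwards [h] with α hα
  have hb := Real.cos_bound hα
  have h4 : |α| ^ 4 ≤ |α| ^ 2 := by
    calc |α| ^ 4 = |α| ^ 2 * |α| ^ 2 := by ring
    _ ≤ 1 * |α| ^ 2 := by
        have : |α| ^ 2 ≤ 1 ^ 2 := pow_le_pow_left₀ (abs_nonneg α) hα 2
        nlinarith [sq_nonneg α]
    _ = |α| ^ 2 := by ring
  have habs : |1 - Real.cos α| ≤ α ^ 2 / 2 + |α| ^ 4 * (5 / 96) := by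
    have h1 : 1 - Real.cos α = -(Real.cos α - (1 - α ^ 2 / 2)) + α ^ 2 / 2 := by ring
    rw [h1]
    refine (abs_add_le _ _).trans ?_
    rw [abs_neg, abs_of_nonneg (by positivity : (0:ℝ) ≤ α ^ 2 / 2)]
    linarith [hb]
  have : |1 - Real.cos α| ≤ α ^ 2 := by
    have h2 : |α| ^ 2 = α ^ 2 := sq_abs α
    nlinarith [sq_nonneg α]
  simpa [abs_of_nonneg (sq_nonneg α)] using this

theorem stmt16 (a b c d : ℝ) (hcd : c + d ≠ 0) (hab : a + b = c + d) :
    (fun α : ℝ =>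
        ‖((a : ℂ) * Complex.exp (Complex.I * α) + b) /
          ((c : ℂ) * Complex.exp (Complex.I * α) + d)‖ - 1) =O[nhds 0]
      (fun α : ℝ => α ^ 2) := by
  set S := (a + b) ^ 2 with hS
  set T := (c + d) ^ 2 with hT
  set F : ℝ → ℝ := fun t => Real.sqrt ((S - 2 * a * b * t) / (T - 2 * c * d * t)) - 1 with hF
  -- F is differentiable at 0 with F 0 = 0
  have hT0 : T ≠ 0 := pow_ne_zero 2 hcd
  have hq0 : (S - 2 * a * b * 0) / (T - 2 * c * d * 0) = 1 := by
    field_simp [hS, hT, hab]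
    simp [hS, hT, hab]
  have hST : S / T = 1 := by rw [hS, hT, hab]; field_simp
  have hF0 : F 0 = 0 := by simp [hF, hST]
  have hdiffq : DifferentiableAt ℝ (fun t : ℝ => (S - 2 * a * b * t) / (T - 2 * c * d * t)) 0 := by
    apply DifferentiableAt.div
    · fun_prop
    · fun_prop
    · simpa using hT0
  have hdiffF : DifferentiableAt ℝ F 0 := by
    apply DifferentiableAt.sub_const
    exact hdiffq.sqrt (by rw [hq0]; norm_num)
  have hFbig : (fun t : ℝ => F t) =O[nhds 0] (fun t : ℝ => t) := by
    have := hdiffF.isBigO_sub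
    simpa [hF0] using this
  -- compose with 1 - cos
  have hu : Filter.Tendsto (fun α : ℝ => 1 - Real.cos α) (nhds 0) (nhds 0) := by
    have : Continuous (fun α : ℝ => 1 - Real.cos α) := by fun_prop
    simpa using this.tendsto 0
  have hcomp : (fun α : ℝ => F (1 - Real.cos α)) =O[nhds 0] (fun α : ℝ => 1 - Real.cos α) :=
    hFbig.comp_tendsto hu
  have hmain : (fun α : ℝ => F (1 - Real.cos α)) =O[nhds 0] (fun α : ℝ => α ^ 2) :=
    hcomp.trans one_sub_cos_isBigO
  refine hmain.congr' ?_ (EventuallyEq.refl _ _)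
  refine Filter.Eventually.of_forall fun α => ?_
  have hNum := normSq_key a b α
  have hDen := normSq_key c d α
  have hNumNonneg : (0:ℝ) ≤ S - 2 * a * b * (1 - Real.cos α) := by
    rw [← hNum]; exact Complex.normSq_nonneg _
  rw [hF]
  simp only
  rw [norm_div, Complex.norm_def, Complex.norm_def, hNum, hDen,
    Real.sqrt_div hNumNonneg]
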